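/- Fix n ∈ ℕ, let A be a quantum adjacency matrix on (M_n, tr), and let S' ⊆ B(L²(M_n)) be the linear span of the operators L_a∘A∘L_b, a, b ∈ M_n, where L_a is left multiplication by a. Set e := n·∑_{i,j=1}^n ε_{i,j}⊗A(ε_{j,i}) ∈ M_n⊗M_n. Then Ψ(S') = span{(1⊗a)·e·(b⊗1) : a, b ∈ M_n}, where the products on the right are taken in the algebra M_n⊗M_n with its usual multiplication. -/

import Mathlib

open scoped ComplexOrder
open scoped Kronecker
open Matrix

noncomputable section

/-- Matrix units in `M_n`. -/
def eps {n : ℕ} (i j : Fin n) : Matrix (Fin n) (Fin n) ℂ := Matrix.single i j 1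

/-- A quantum adjacency matrix on `(M_n, tr)` (where `tr = Tr/n`). -/
def IsQAdj (n : ℕ) (A : Matrix (Fin n) (Fin n) ℂ →ₗ[ℂ] Matrix (Fin n) (Fin n) ℂ) : Prop :=
  (∀ a b : Matrix (Fin n) (Fin n) ℂ,
      Matrix.trace ((A a)ᴴ * b) / (n : ℂ) = Matrix.trace (aᴴ * A b) / (n : ℂ)) ∧
  (∀ i j : Fin n, (n : ℂ) • ∑ k, A (eps i k) * A (eps k j) = A (eps i j)) ∧
  (∀ x : Matrix (Fin n) (Fin n) ℂ,
      A x = (n : ℂ) • ∑ i, ∑ j, (Matrix.trace (A (eps j i) * x) / (n : ℂ)) • eps i j) ∧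
  (∀ i j : Fin n, (n : ℂ) • ∑ k, A (eps i k) * eps k j = 0)

/-- The element `e = n ∑_{i,j} ε_{i,j} ⊗ A(ε_{j,i})` of `M_n ⊗ M_n`. -/
def eMat (n : ℕ) (A : Matrix (Fin n) (Fin n) ℂ →ₗ[ℂ] Matrix (Fin n) (Fin n) ℂ) :
    Matrix (Fin n × Fin n) (Fin n × Fin n) ℂ :=
  (n : ℂ) • ∑ i, ∑ j, (eps i j) ⊗ₖ (A (eps j i))

/-- The linear isomorphism `Ψ : B(L²(M_n)) → M_n ⊗ M_n`, determined by
`Ψ(Θ_{Λ(x),Λ(y)}) = x^* ⊗ y`; in closed form `Ψ(T) = n ∑_{i,j} ε_{i,j}^* ⊗ T(ε_{i,j})`. -/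
def Psi (n : ℕ) (T : Matrix (Fin n) (Fin n) ℂ → Matrix (Fin n) (Fin n) ℂ) :
    Matrix (Fin n × Fin n) (Fin n × Fin n) ℂ :=
  (n : ℂ) • ∑ i, ∑ j, (eps i j)ᴴ ⊗ₖ (T (eps i j))

theorem Psi_apply' {n : ℕ} (T : Matrix (Fin n) (Fin n) ℂ → Matrix (Fin n) (Fin n) ℂ)
    (p q r s : Fin n) : Psi n T (p,q) (r,s) = (n : ℂ) * (T (eps r p)) q s := by
  simp only [Psi, Matrix.smul_apply, Matrix.sum_apply, Matrix.kroneckerMap_apply,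
    Matrix.conjTranspose_apply, eps, Matrix.single, Matrix.of_apply, smul_eq_mul]
  congr 1
  rw [Finset.sum_eq_single_of_mem r (Finset.mem_univ r)]
  · rw [Finset.sum_eq_single_of_mem p (Finset.mem_univ p)]
    · simp
    · intro b _ hb; simp [hb]
  · intro b _ hb
    rw [Finset.sum_eq_zero]
    intro c _; simp [hb]

theorem eMat_apply' {n : ℕ} (A : Matrix (Fin n) (Fin n) ℂ →ₗ[ℂ] Matrix (Fin n) (Fin n) ℂ)
    (u v w x : Fin n) : eMat n A (u,v) (w,x) = (n : ℂ) * (A (eps w u)) v x := by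
  simp only [eMat, Matrix.smul_apply, Matrix.sum_apply, Matrix.kroneckerMap_apply,
    eps, Matrix.single, Matrix.of_apply, smul_eq_mul]
  congr 1
  rw [Finset.sum_eq_single_of_mem u (Finset.mem_univ u)]
  · rw [Finset.sum_eq_single_of_mem w (Finset.mem_univ w)]
    · simp [eps, Matrix.single]
    · intro c _ hc; simp [hc]
  · intro c _ hc
    rw [Finset.sum_eq_zero]
    intro d _; simp [hc]

theorem mul_eps' {n : ℕ} (b : Matrix (Fin n) (Fin n) ℂ) (r p : Fin n) :
    b * eps r p = ∑ w, b w r • eps w p := by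
  ext i j
  simp only [Matrix.mul_apply, eps, Matrix.single, Matrix.of_apply,
    Matrix.sum_apply, Matrix.smul_apply, smul_eq_mul, mul_ite, mul_one, mul_zero, ite_and]
  by_cases hp : p = j <;> simp [hp]

theorem kron_one_mul {n : ℕ} (a : Matrix (Fin n) (Fin n) ℂ)
    (C : Matrix (Fin n × Fin n) (Fin n × Fin n) ℂ) (p q : Fin n) (z : Fin n × Fin n) :
    (((1 : Matrix (Fin n) (Fin n) ℂ) ⊗ₖ a) * C) (p,q) z = ∑ v, a q v * C (p,v) z := by
  rw [Matrix.mul_apply, Fintype.sum_prod_type]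
  simp [Matrix.one_apply, ite_mul, zero_mul, Finset.sum_ite_eq, Finset.sum_ite_eq']

theorem e_mul_kron {n : ℕ} (A : Matrix (Fin n) (Fin n) ℂ →ₗ[ℂ] Matrix (Fin n) (Fin n) ℂ)
    (b : Matrix (Fin n) (Fin n) ℂ) (u v r s : Fin n) :
    (eMat n A * (b ⊗ₖ (1 : Matrix (Fin n) (Fin n) ℂ))) (u,v) (r,s) =
      ∑ w, (n : ℂ) * (A (eps w u)) v s * b w r := by
  rw [Matrix.mul_apply, Fintype.sum_prod_type]
  simp only [eMat_apply', Matrix.kroneckerMap_apply, Matrix.one_apply, mul_ite, mul_one,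
    mul_zero, Finset.sum_ite_eq, Finset.sum_ite_eq', Finset.mem_univ, if_true]

theorem key {n : ℕ} (A : Matrix (Fin n) (Fin n) ℂ →ₗ[ℂ] Matrix (Fin n) (Fin n) ℂ)
    (a b : Matrix (Fin n) (Fin n) ℂ) :
    Psi n (LinearMap.mulLeft ℂ a ∘ₗ A ∘ₗ LinearMap.mulLeft ℂ b) =
      ((1 : Matrix (Fin n) (Fin n) ℂ) ⊗ₖ a) * eMat n A *
        (b ⊗ₖ (1 : Matrix (Fin n) (Fin n) ℂ)) := by
  ext ⟨p, q⟩ ⟨r, s⟩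
  rw [Psi_apply', mul_assoc]
  simp only [LinearMap.coe_comp, Function.comp_apply, LinearMap.mulLeft_apply]
  rw [mul_eps', map_sum, kron_one_mul]
  simp only [e_mul_kron]
  simp only [_root_.map_smul, Matrix.mul_sum, Matrix.sum_apply,
    Matrix.smul_apply, smul_eq_mul, Matrix.mul_apply, Finset.mul_sum, Finset.sum_mul]
  exact Finset.sum_congr rfl fun _ _ => Finset.sum_congr rfl fun _ _ => by ring

/-- `Psi` as a linear map on `B(L²(M_n))`. -/
def PsiL (n : ℕ) :
    (Matrix (Fin n) (Fin n) ℂ →ₗ[ℂ] Matrix (Fin n) (Fin n) ℂ) →ₗ[ℂ]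
      Matrix (Fin n × Fin n) (Fin n × Fin n) ℂ where
  toFun T := Psi n T
  map_add' T S := by
    ext ⟨p, q⟩ ⟨r, s⟩
    simp [Psi_apply', mul_add]
  map_smul' c T := by
    ext ⟨p, q⟩ ⟨r, s⟩
    simp [Psi_apply']
    ring

/-- For a quantum adjacency matrix `A`, with `S'` the `M_n`-bimodule
generated by `A` inside `B(L²(M_n))`, one has
`Ψ(S') = span{(1 ⊗ a) e (b ⊗ 1) : a, b ∈ M_n}`. -/
theorem Psi_image_of_bimodule {n : ℕ}
    (A : Matrix (Fin n) (Fin n) ℂ →ₗ[ℂ] Matrix (Fin n) (Fin n) ℂ)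
    (hA : IsQAdj n A) :
    (fun T : Matrix (Fin n) (Fin n) ℂ →ₗ[ℂ] Matrix (Fin n) (Fin n) ℂ => Psi n T) ''
        ((Submodule.span ℂ
          {T : Matrix (Fin n) (Fin n) ℂ →ₗ[ℂ] Matrix (Fin n) (Fin n) ℂ |
            ∃ a b : Matrix (Fin n) (Fin n) ℂ,
              T = LinearMap.mulLeft ℂ a ∘ₗ A ∘ₗ LinearMap.mulLeft ℂ b}) : Set _) =
      ((Submodule.span ℂ
          {M : Matrix (Fin n × Fin n) (Fin n × Fin n) ℂ |
            ∃ a b : Matrix (Fin n) (Fin n) ℂ,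
              M = ((1 : Matrix (Fin n) (Fin n) ℂ) ⊗ₖ a) * eMat n A *
                (b ⊗ₖ (1 : Matrix (Fin n) (Fin n) ℂ))}) : Set _) := by
  have hc : (fun T : Matrix (Fin n) (Fin n) ℂ →ₗ[ℂ] Matrix (Fin n) (Fin n) ℂ => Psi n T)
      = ⇑(PsiL n) := rfl
  rw [hc, ← Submodule.map_coe, Submodule.map_span]
  have hset : ⇑(PsiL n) ''
      {T : Matrix (Fin n) (Fin n) ℂ →ₗ[ℂ] Matrix (Fin n) (Fin n) ℂ |
        ∃ a b : Matrix (Fin n) (Fin n) ℂ,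
          T = LinearMap.mulLeft ℂ a ∘ₗ A ∘ₗ LinearMap.mulLeft ℂ b} =
      {M : Matrix (Fin n × Fin n) (Fin n × Fin n) ℂ |
        ∃ a b : Matrix (Fin n) (Fin n) ℂ,
          M = ((1 : Matrix (Fin n) (Fin n) ℂ) ⊗ₖ a) * eMat n A *
            (b ⊗ₖ (1 : Matrix (Fin n) (Fin n) ℂ))} := by
    ext M
    simp only [Set.mem_image, Set.mem_setOf_eq]
    constructor
    · rintro ⟨T, ⟨a, b, rfl⟩, rfl⟩
      exact ⟨a, b, key A a b⟩
    · rintro ⟨a, b, rfl⟩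
      exact ⟨_, ⟨a, b, rfl⟩, key A a b⟩
  rw [hset]
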